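/- If S ∈ S_k, then S is bipartite with all its leaves in a single partite class, and this partite class equals the distinguished set X(S). -/

import Mathlib

open scoped Classical


/-- `SStar k G VS X` says that the subgraph of `G` induced on the vertex set `VS`,
together with the distinguished vertex set `X ⊆ VS`, is a member of the family
`S_k^*` (defined recursively: `S_1^* = {P_1}` with `X` the single vertex; a member
of `S_{k}^*` for `k ≥ 2` is obtained from disjoint members `S^1 ∈ S_{k-1}^*` and
`S^2 ∈ ∪_{i<k} S_i^*` by joining a new origin vertex `z` to chosen vertices
`x₁ ∈ X(S^1)` and `x₂ ∈ X(S^2)`, with `X = X(S^1) ∪ X(S^2)`). -/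
def SStar {V : Type} : ℕ → SimpleGraph V → Set V → Set V → Prop
  | 0, _, _, _ => False
  | 1, _, VS, X => ∃ x : V, VS = {x} ∧ X = {x}
  | (k+2), G, VS, X => ∃ (z : V) (A B : Set V) (x₁ x₂ : V),
      z ∈ VS ∧ z ∉ X ∧ X ⊆ VS ∧ A ∪ B = VS \ {z} ∧ Disjoint A B ∧
      x₁ ∈ A ∩ X ∧ x₂ ∈ B ∩ X ∧
      (∀ v ∈ VS, G.Adj z v ↔ (v = x₁ ∨ v = x₂)) ∧
      (∀ a ∈ A, ∀ b ∈ B, ¬ G.Adj a b) ∧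
      SStar (k+1) G A (X ∩ A) ∧
      (∃ i, ∃ _ : 1 ≤ i ∧ i ≤ k + 1, SStar i G B (X ∩ B))
termination_by k _ _ _ => k
decreasing_by all_goals omega

/-- The subgraph of `G` induced on `VS` with distinguished set `X` is a member of
the family `S_k = S_k^* \ (S_1 ∪ ⋯ ∪ S_{k-1})`. -/
def SFamilyAt (k : ℕ) {V : Type} (G : SimpleGraph V) (VS X : Set V) : Prop :=
  SStar k G VS X ∧ ∀ i < k, ¬ SStar i G VS X

/-- The graph `G` itself, with distinguished set `X`, is a member of the family `S_k`. -/
def SFamily (k : ℕ) {V : Type} (G : SimpleGraph V) (X : Set V) : Prop :=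
  SFamilyAt k G Set.univ X

/-- `G` contains a substructure from `S_k`: a subgraph (induced on some vertex set
`VS`, with distinguished set `X`) belonging to `S_k` such that every vertex of `X`
has the same degree in the subgraph as in `G`, i.e. all `G`-neighbors of vertices
of `X` lie in `VS`. -/
def HasSubstructure (k : ℕ) {V : Type} (G : SimpleGraph V) : Prop :=
  ∃ VS X : Set V, SFamilyAt k G VS X ∧ ∀ x ∈ X, ∀ w : V, G.Adj x w → w ∈ VS


/-- If `S ∈ S_k`, then `S` is bipartite with all of its leaves in a single partite
class, and this partite class equals the distinguished set `X(S)`: the edges of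
`S` go exactly between `X` and its complement, and every leaf belongs to `X`. -/

lemma sstar_key {V : Type} (k : ℕ) (G : SimpleGraph V) :
    ∀ VS X : Set V, SStar k G VS X →
      X ⊆ VS ∧
      (∀ a ∈ VS, ∀ b ∈ VS, G.Adj a b → (a ∈ X ↔ b ∉ X)) ∧
      (∀ v ∈ VS, v ∉ X → ∃ w₁ ∈ VS, ∃ w₂ ∈ VS, w₁ ≠ w₂ ∧ G.Adj v w₁ ∧ G.Adj v w₂) := by
  induction k using Nat.strong_induction_on with
  | _ k ih =>
    intro VS X h
    match k with
    | 0 => exact absurd h (by simp [SStar])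
    | 1 =>
      rw [SStar] at h
      obtain ⟨x, hVS, hX⟩ := h
      subst hVS; subst hX
      refine ⟨le_refl _, ?_, ?_⟩
      · rintro a rfl b rfl hab
        exact absurd hab (G.loopless.irrefl _)
      · rintro v rfl hv
        exact absurd rfl hv
    | (k+2) =>
      rw [SStar] at h
      obtain ⟨z, A, B, x₁, x₂, hzVS, hzX, hXVS, hAB, hdisj, hx₁, hx₂, hadjz, hnoAB,
        hA, i, ⟨hi1, hi2⟩, hB⟩ := h
      have ihA := ih (k+1) (by omega) A (X ∩ A) hA
      have ihB := ih i (by omega) B (X ∩ B) hB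
      have hAsub : A ⊆ VS := by
        intro a ha
        have : a ∈ VS \ {z} := hAB ▸ Set.mem_union_left B ha
        exact this.1
      have hBsub : B ⊆ VS := by
        intro b hb
        have : b ∈ VS \ {z} := hAB ▸ Set.mem_union_right A hb
        exact this.1
      have hmem : ∀ v ∈ VS, v = z ∨ v ∈ A ∨ v ∈ B := by
        intro v hv
        by_cases hvz : v = z
        · exact Or.inl hvz
        · have : v ∈ A ∪ B := hAB ▸ ⟨hv, hvz⟩
          exact Or.inr this
      have hx₁X : x₁ ∈ X := hx₁.2
      have hx₂X : x₂ ∈ X := hx₂.2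
      refine ⟨hXVS, ?_, ?_⟩
      · intro a ha b hb hab
        rcases hmem a ha with rfl | haA | haB
        · have : b = x₁ ∨ b = x₂ := (hadjz b hb).mp hab
          constructor
          · intro hzx; exact absurd hzx hzX
          · intro hbX
            rcases this with rfl | rfl
            · exact absurd hx₁X hbX
            · exact absurd hx₂X hbX
        · rcases hmem b hb with rfl | hbA | hbB
          · have : a = x₁ ∨ a = x₂ := (hadjz a ha).mp hab.symm
            constructor
            · intro _ hzx; exact hzX hzx
            · intro _
              rcases this with rfl | rfl
              · exact hx₁X
              · exact hx₂X
          · have := ihA.2.1 a haA b hbA hab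
            constructor
            · intro haX hbX; exact (this.mp ⟨haX, haA⟩) ⟨hbX, hbA⟩
            · intro hbX
              exact (this.mpr (fun hx => hbX hx.1)).1
          · exact absurd hab (hnoAB a haA b hbB)
        · rcases hmem b hb with rfl | hbA | hbB
          · have : a = x₁ ∨ a = x₂ := (hadjz a ha).mp hab.symm
            constructor
            · intro _ hzx; exact hzX hzx
            · intro _
              rcases this with rfl | rfl
              · exact hx₁X
              · exact hx₂X
          · exact absurd hab.symm (hnoAB b hbA a haB)
          · have := ihB.2.1 a haB b hbB hab
            constructor
            · intro haX hbX; exact (this.mp ⟨haX, haB⟩) ⟨hbX, hbB⟩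
            · intro hbX
              exact (this.mpr (fun hx => hbX hx.1)).1
      · intro v hv hvX
        rcases hmem v hv with rfl | hvA | hvB
        · refine ⟨x₁, hAsub hx₁.1, x₂, hBsub hx₂.1, ?_, ?_, ?_⟩
          · intro he
            exact (Set.disjoint_left.mp hdisj hx₁.1) (he ▸ hx₂.1)
          · exact (hadjz x₁ (hAsub hx₁.1)).mpr (Or.inl rfl)
          · exact (hadjz x₂ (hBsub hx₂.1)).mpr (Or.inr rfl)
        · obtain ⟨w₁, hw₁, w₂, hw₂, hne, h1, h2⟩ :=
            ihA.2.2 v hvA (fun hx => hvX hx.1)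
          exact ⟨w₁, hAsub hw₁, w₂, hAsub hw₂, hne, h1, h2⟩
        · obtain ⟨w₁, hw₁, w₂, hw₂, hne, h1, h2⟩ :=
            ihB.2.2 v hvB (fun hx => hvX hx.1)
          exact ⟨w₁, hBsub hw₁, w₂, hBsub hw₂, hne, h1, h2⟩

theorem stmt_1 {V : Type} [Fintype V] (k : ℕ) (hk : 1 ≤ k)
    (G : SimpleGraph V) (X : Set V) (h : SFamily k G X) :
    (∀ a b : V, G.Adj a b → (a ∈ X ↔ b ∉ X)) ∧
    (∀ v : V, G.degree v = 1 → v ∈ X) := by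
  obtain ⟨hS, -⟩ := h
  obtain ⟨-, hbip, hleaf⟩ := sstar_key k G Set.univ X hS
  refine ⟨fun a b hab => hbip a (Set.mem_univ a) b (Set.mem_univ b) hab, ?_⟩
  intro v hdeg
  by_contra hvX
  obtain ⟨w₁, -, w₂, -, hne, h1, h2⟩ := hleaf v (Set.mem_univ v) hvX
  have : 1 < G.degree v := by
    rw [SimpleGraph.degree]
    exact Finset.one_lt_card.mpr ⟨w₁, by simpa using h1, w₂, by simpa using h2, hne⟩
  omega
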